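/- Let d | q-1 with d ≠ 1 and let (γ^((q-1)/d), 0, H) ∈ S. Then the subgroups K of AGL(1,F_q) with S(γ^((q-1)/d), 0, H) ≤ K are precisely the subgroups of the form S(γ^((q-1)/d1), 0, H1), where d | d1 | q-1, H ⊆ H1, and (γ^((q-1)/d1), 0, H1) ∈ S. -/

import Mathlib

open Matrix
open scoped Classical

abbrev GL2 (F : Type) [Field F] := GL (Fin 2) F

/-- `AGL(1,F)`: the subgroup of `GL(2,F)` of matrices of the form `[[a,b],[0,1]]`. -/
def AGL (F : Type) [Field F] : Subgroup (GL2 F) where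
  carrier := {g | (g : Matrix (Fin 2) (Fin 2) F) 1 0 = 0 ∧
                  (g : Matrix (Fin 2) (Fin 2) F) 1 1 = 1}
  one_mem' := by
    constructor <;> simp [Matrix.one_apply]
  mul_mem' := by
    rintro a b ⟨ha0, ha1⟩ ⟨hb0, hb1⟩
    constructor <;>
      simp [Units.val_mul, Matrix.mul_apply, Fin.sum_univ_two, ha0, ha1, hb0, hb1]
  inv_mem' := by
    rintro g ⟨h0, h1⟩
    have hdet : ((g : Matrix (Fin 2) (Fin 2) F) 0 0) ≠ 0 := by
      have hu : IsUnit ((g : Matrix (Fin 2) (Fin 2) F).det) :=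
        (Matrix.isUnit_iff_isUnit_det _).1 g.isUnit
      rw [Matrix.det_fin_two, h0, h1] at hu
      simpa using hu.ne_zero
    have hinv : ((g⁻¹ : GL2 F) : Matrix (Fin 2) (Fin 2) F)
        = ((g : Matrix (Fin 2) (Fin 2) F))⁻¹ := Matrix.coe_units_inv g
    constructor <;>
      simp [hinv, Matrix.inv_def, Matrix.adjugate_fin_two, Matrix.det_fin_two,
        h0, h1, hdet]

/-- Membership of a triple `(a,b,H)` in the set `𝒮`: `a ∈ F*`, `H` is an additive
subgroup of `F` closed under multiplication by the subfield `F_p(a)` generated by `a`,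
and `b = 0` when `a = 1`. -/
def memS {F : Type} [Field F] (a b : F) (H : AddSubgroup F) : Prop :=
  a ≠ 0 ∧ (a = 1 → b = 0) ∧ ∀ x ∈ Subfield.closure {a}, ∀ h ∈ H, x * h ∈ H

/-- `S(a,b,H)`: the subgroup of `GL(2,F)` generated by the matrix `[[a,b],[0,1]]`
together with the matrices `[[1,h],[0,1]]`, `h ∈ H`. -/
def Sgrp {F : Type} [Field F] (a b : F) (H : AddSubgroup F) : Subgroup (GL2 F) :=
  Subgroup.closure {g : GL2 F |
    (g : Matrix (Fin 2) (Fin 2) F) = !![a, b; 0, 1] ∨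
    ∃ h ∈ H, (g : Matrix (Fin 2) (Fin 2) F) = !![1, h; 0, 1]}

/-- `pPow p d` is `p(d)`: the smallest (positive) power of `p` that is `≡ 1 (mod d)`. -/
noncomputable def pPow (p d : ℕ) : ℕ := sInf {m | (∃ k : ℕ, 1 ≤ k ∧ m = p ^ k) ∧ m % d = 1 % d}

section Helpers
variable {F : Type} [Field F]

def mk (u : Fˣ) (b : F) : GL2 F :=
  Matrix.GeneralLinearGroup.mkOfDetNeZero !![(u : F), b; 0, 1]
    (by simp [Matrix.det_fin_two])

@[simp] lemma mk_val (u : Fˣ) (b : F) :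
    (mk u b : Matrix (Fin 2) (Fin 2) F) = !![(u : F), b; 0, 1] := rfl

lemma mk_mul (u v : Fˣ) (b c : F) :
    mk u b * mk v c = mk (u * v) ((u : F) * c + b) := by
  apply Units.ext
  simp only [Units.val_mul, mk_val, Matrix.mul_fin_two]
  congr 1 <;> ring

lemma mk_congr {u v : Fˣ} {b c : F} (h1 : u = v) (h2 : b = c) : mk u b = mk v c := by
  subst h1; subst h2; rfl

lemma mk_one : mk (1 : Fˣ) 0 = 1 := by
  apply Units.ext
  simp [Matrix.one_fin_two]

lemma mk_inv (u : Fˣ) (b : F) : (mk u b)⁻¹ = mk u⁻¹ (-(((u⁻¹ : Fˣ) : F)) * b) := by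
  apply inv_eq_of_mul_eq_one_right
  rw [mk_mul]
  rw [show u * u⁻¹ = 1 from mul_inv_cancel u]
  rw [show (u : F) * (-(((u⁻¹ : Fˣ) : F)) * b) + b = 0 by
    rw [Units.val_inv_eq_inv_val]
    field_simp
    ring]
  exact mk_one

lemma mk_pow (u : Fˣ) (n : ℕ) : (mk u 0) ^ n = mk (u ^ n) 0 := by
  induction n with
  | zero => simpa using mk_one.symm
  | succ n ih => rw [pow_succ, ih, mk_mul, pow_succ]; exact mk_congr rfl (by ring)

/-- Every element of `AGL` has the form `mk u b`. -/
lemma eq_mk_of_mem_AGL {g : GL2 F} (hg : g ∈ AGL F) :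
    ∃ (u : Fˣ) (b : F), g = mk u b := by
  obtain ⟨h0, h1⟩ := hg
  have hdet : ((g : Matrix (Fin 2) (Fin 2) F) 0 0) ≠ 0 := by
    have hu : IsUnit ((g : Matrix (Fin 2) (Fin 2) F).det) :=
      (Matrix.isUnit_iff_isUnit_det _).1 g.isUnit
    rw [Matrix.det_fin_two, h0, h1] at hu
    simpa using hu.ne_zero
  refine ⟨Units.mk0 _ hdet, (g : Matrix (Fin 2) (Fin 2) F) 0 1, Units.ext ?_⟩
  show (g : Matrix (Fin 2) (Fin 2) F) = _
  rw [mk_val]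
  ext i j
  fin_cases i <;> fin_cases j <;> simp [h0, h1]

lemma mk_left_mem_Sgrp (u : Fˣ) (b : F) (H : AddSubgroup F) :
    mk u b ∈ Sgrp (u : F) b H :=
  Subgroup.subset_closure (Or.inl (by simp))

lemma mk_trans_mem_Sgrp (a b : F) {h : F} (H : AddSubgroup F) (hh : h ∈ H) :
    mk 1 h ∈ Sgrp a b H :=
  Subgroup.subset_closure (Or.inr ⟨h, hh, by simp⟩)

lemma Sgrp_le_AGL (a b : F) (H : AddSubgroup F) : Sgrp a b H ≤ AGL F := by
  apply (Subgroup.closure_le _).2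
  rintro g (hg | ⟨h, hh, hg⟩) <;>
    exact ⟨by rw [hg]; simp, by rw [hg]; simp⟩

lemma Sgrp_pow_le (u : Fˣ) (m : ℕ) (H H1 : AddSubgroup F) (hH : H ≤ H1) :
    Sgrp ((u : F) ^ m) 0 H ≤ Sgrp (u : F) 0 H1 := by
  apply (Subgroup.closure_le _).2
  rintro g (hg | ⟨h, hh, hg⟩)
  · have hgm : g = mk (u ^ m) 0 := Units.ext (by rw [hg]; simp)
    rw [hgm, ← mk_pow]
    exact pow_mem (mk_left_mem_Sgrp u 0 H1) m
  · have hgm : g = mk 1 h := Units.ext (by rw [hg]; simp)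
    rw [hgm]
    exact mk_trans_mem_Sgrp _ _ H1 (hH hh)

end Helpers

/-- For `d ∣ q-1`, `d ≠ 1`, and `(γ^((q-1)/d),0,H) ∈ 𝒮`, the subgroups of
`AGL(1,F_q)` containing `S(γ^((q-1)/d),0,H)` are precisely the
`S(γ^((q-1)/d₁),0,H₁)` with `d ∣ d₁ ∣ q-1`, `H ⊆ H₁`, `(γ^((q-1)/d₁),0,H₁) ∈ 𝒮`. -/
theorem stmt9 (F : Type) [Field F] [Fintype F] (q : ℕ) (hq : Fintype.card F = q)
    (γ : F) (hγ0 : γ ≠ 0) (hγ : ∀ x : F, x ≠ 0 → ∃ k : ℕ, x = γ ^ k)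
    (d : ℕ) (hd : d ∣ q - 1) (hdne : d ≠ 1) (H : AddSubgroup F)
    (hS : memS (γ ^ ((q - 1) / d)) 0 H) (K : Subgroup (GL2 F)) :
    (Sgrp (γ ^ ((q - 1) / d)) 0 H ≤ K ∧ K ≤ AGL F) ↔
      ∃ (d1 : ℕ) (H1 : AddSubgroup F), d ∣ d1 ∧ d1 ∣ q - 1 ∧ H ≤ H1 ∧
        memS (γ ^ ((q - 1) / d1)) 0 H1 ∧ K = Sgrp (γ ^ ((q - 1) / d1)) 0 H1 := by
  have hq2 : 2 ≤ q := by rw [← hq]; exact Fintype.one_lt_card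
  constructor
  · rintro ⟨hK, hA⟩
    set N := q - 1 with hN
    have hN1 : 1 ≤ N := by omega
    have hNcard : Fintype.card Fˣ = N := by rw [Fintype.card_units, hq]
    set γu : Fˣ := Units.mk0 γ hγ0 with hγu_def
    have hγuval : (γu : F) = γ := rfl
    have hmemz : ∀ x : Fˣ, ∃ n : ℕ, x = γu ^ n := by
      intro x
      obtain ⟨k, hk⟩ := hγ x.val x.ne_zero
      exact ⟨k, Units.ext (by rw [Units.val_pow_eq_pow_val]; exact hk)⟩
    have hordγ : orderOf γu = N := by
      rw [← hNcard, ← Nat.card_eq_fintype_card]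
      apply orderOf_eq_card_of_forall_mem_zpowers
      intro x
      obtain ⟨n, hn⟩ := hmemz x
      exact Subgroup.mem_zpowers_iff.2 ⟨(n : ℤ), by rw [zpow_natCast, ← hn]⟩
    have hordpow : ∀ e : ℕ, e ∣ N → orderOf (γu ^ (N / e)) = e := by
      intro e he
      rw [orderOf_pow, hordγ, Nat.gcd_eq_right (Nat.div_dvd_of_dvd he),
        Nat.div_div_self he (by omega)]
    have hd0 : d ≠ 0 := by rintro rfl; have := Nat.eq_zero_of_zero_dvd hd; omega
    have hd2 : 2 ≤ d := by omega
    set a0u : Fˣ := γu ^ (N / d) with ha0u_def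
    have hord0 : orderOf a0u = d := hordpow d hd
    have ha0val : (a0u : F) = γ ^ (N / d) := by
      rw [ha0u_def, Units.val_pow_eq_pow_val, hγuval]
    have ha0K : mk a0u 0 ∈ K := by
      apply hK
      exact Subgroup.subset_closure (Or.inl (by rw [mk_val, ha0val]))
    have ha0ne1 : (a0u : F) ≠ 1 := by
      intro h
      have h2 : a0u = 1 := Units.ext h
      rw [h2, orderOf_one] at hord0; omega
    -- the additive subgroup of translations in K
    let H1 : AddSubgroup F := {
      carrier := {h : F | mk 1 h ∈ K}
      zero_mem' := by show mk 1 (0 : F) ∈ K; rw [mk_one]; exact K.one_mem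
      add_mem' := by
        intro x y hx hy
        show mk 1 (x + y) ∈ K
        have h3 := K.mul_mem hx hy
        rwa [mk_mul, one_mul,
          show (((1 : Fˣ) : F) * y + x) = x + y by simp [add_comm]] at h3
      neg_mem' := by
        intro x hx
        show mk 1 (-x) ∈ K
        have h3 := K.inv_mem hx
        rwa [mk_inv, inv_one, show (-(((1 : Fˣ) : F)) * x) = -x by simp] at h3 }
    have hH1mem : ∀ h : F, h ∈ H1 ↔ mk 1 h ∈ K := fun h => Iff.rfl
    have hswap : ∀ (u : Fˣ) (h : F), mk u 0 * mk 1 h = mk 1 ((u : F) * h) * mk u 0 := by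
      intro u h
      rw [mk_mul, mk_mul]
      exact mk_congr (by rw [mul_one, one_mul]) (by simp)
    have hmulH1 : ∀ u : Fˣ, mk u 0 ∈ K → ∀ h ∈ H1, (u : F) * h ∈ H1 := by
      intro u hu h hh
      show mk 1 ((u : F) * h) ∈ K
      have hm : mk 1 ((u : F) * h) = mk u 0 * mk 1 h * (mk u 0)⁻¹ := by
        rw [hswap, mul_inv_cancel_right]
      rw [hm]
      exact K.mul_mem (K.mul_mem hu hh) (K.inv_mem hu)
    have hpowR : ∀ x : F, (∀ h ∈ H1, x * h ∈ H1) → ∀ n : ℕ, ∀ h ∈ H1, x ^ n * h ∈ H1 := by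
      intro x hx n
      induction n with
      | zero => intro h hh; simpa using hh
      | succ n ih =>
        intro h hh
        have h4 : x ^ (n + 1) * h = x ^ n * (x * h) := by ring
        rw [h4]; exact ih _ (hx _ hh)
    let R : Subfield F := {
      carrier := {x : F | ∀ h ∈ H1, x * h ∈ H1}
      zero_mem' := by intro h hh; simpa using H1.zero_mem
      one_mem' := by intro h hh; simpa using hh
      add_mem' := by intro x y hx hy h hh; rw [add_mul]; exact H1.add_mem (hx _ hh) (hy _ hh)
      neg_mem' := by intro x hx h hh; rw [neg_mul]; exact H1.neg_mem (hx _ hh)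
      mul_mem' := by intro x y hx hy h hh; rw [mul_assoc]; exact hx _ (hy _ hh)
      inv_mem' := by
        intro x hx
        rcases eq_or_ne x 0 with rfl | hx0
        · simpa using hx
        · have hpc : x ^ (q - 1) = 1 := by
            have h5 := FiniteField.pow_card_sub_one_eq_one x hx0
            rwa [hq] at h5
          have hxe : x⁻¹ = x ^ (q - 2) := by
            apply inv_eq_of_mul_eq_one_right
            rw [← pow_succ']
            rw [show q - 2 + 1 = q - 1 by omega]
            exact hpc
          rw [hxe]
          exact hpowR x hx (q - 2) }
    have hRdef : ∀ x : F, x ∈ R ↔ ∀ h ∈ H1, x * h ∈ H1 := fun x => Iff.rfl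
    have ha0R : ((a0u : F) : F) ∈ R := (hRdef _).2 (hmulH1 a0u ha0K)
    -- key step: from mk u b ∈ K deduce b ∈ H1 and mk u 0 ∈ K
    have hstep : ∀ (u : Fˣ) (b : F), mk u b ∈ K → b ∈ H1 ∧ mk u 0 ∈ K := by
      intro u b hub
      have hcomm : mk a0u 0 * mk u b = mk 1 (((a0u : F) - 1) * b) * (mk u b * mk a0u 0) := by
        rw [mk_mul, mk_mul, mk_mul]
        refine mk_congr (by rw [one_mul, mul_comm]) ?_
        simp only [Units.val_one, mul_zero, zero_add, add_zero, one_mul]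
        ring
      have hcK : mk 1 (((a0u : F) - 1) * b) ∈ K := by
        have h2 : mk 1 (((a0u : F) - 1) * b)
            = (mk a0u 0 * mk u b) * (mk u b * mk a0u 0)⁻¹ := by
          rw [hcomm, mul_inv_cancel_right]
        rw [h2]
        exact K.mul_mem (K.mul_mem ha0K hub) (K.inv_mem (K.mul_mem hub ha0K))
      have hsub : ((a0u : F) - 1) ∈ R := R.sub_mem ha0R R.one_mem
      have hsubne : ((a0u : F) - 1) ≠ 0 := sub_ne_zero.2 ha0ne1
      have hbH1 : b ∈ H1 := by
        have h6 := (hRdef _).1 (R.inv_mem hsub) _ ((hH1mem _).2 hcK)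
        rwa [← mul_assoc, inv_mul_cancel₀ hsubne, one_mul] at h6
      refine ⟨hbH1, ?_⟩
      have h7 : mk 1 (-b) * mk u b = mk u 0 := by
        rw [mk_mul]; exact mk_congr (one_mul u) (by simp)
      rw [← h7]
      exact K.mul_mem ((hH1mem _).1 (H1.neg_mem hbH1)) hub
    -- the multiplicative part of K
    let T : Subgroup Fˣ := {
      carrier := {u : Fˣ | ∃ b : F, mk u b ∈ K}
      one_mem' := ⟨0, by rw [mk_one]; exact K.one_mem⟩
      mul_mem' := by
        rintro u v ⟨b, hb⟩ ⟨c, hc⟩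
        exact ⟨(u : F) * c + b, by rw [← mk_mul]; exact K.mul_mem hb hc⟩
      inv_mem' := by
        rintro u ⟨b, hb⟩
        exact ⟨-(((u⁻¹ : Fˣ) : F)) * b, by rw [← mk_inv]; exact K.inv_mem hb⟩ }
    obtain ⟨g, hg⟩ := IsCyclic.exists_generator (α := T)
    set a : Fˣ := (g : Fˣ) with ha_def
    have hmemT : ∀ u : Fˣ, u ∈ T → ∃ n : ℕ, u = a ^ n := by
      intro u hu
      have h1 : (⟨u, hu⟩ : T) ∈ Subgroup.zpowers g := hg _
      have h2 : (⟨u, hu⟩ : T) ∈ Submonoid.powers g := mem_powers_iff_mem_zpowers.2 h1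
      obtain ⟨n, hn⟩ := h2
      refine ⟨n, ?_⟩
      have h3 := congrArg (fun t : T => (t : Fˣ)) hn
      simpa [ha_def] using h3.symm
    set d1 : ℕ := orderOf a with hd1_def
    have hd1N : d1 ∣ N := by rw [← hNcard]; exact orderOf_dvd_card
    have hd1pos : 0 < d1 := orderOf_pos a
    have haT : a ∈ T := g.2
    have ha0T : a0u ∈ T := ⟨0, ha0K⟩
    obtain ⟨j, hj⟩ := hmemT a0u ha0T
    have hdd1 : d ∣ d1 := by
      rw [← hord0]
      apply orderOf_dvd_of_pow_eq_one
      rw [hj, ← pow_mul, mul_comm j d1, pow_mul, hd1_def, pow_orderOf_eq_one, one_pow]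
    have hd12 : 2 ≤ d1 := by
      have := Nat.le_of_dvd hd1pos hdd1; omega
    set a1u : Fˣ := γu ^ (N / d1) with ha1u_def
    have hord1 : orderOf a1u = d1 := hordpow d1 hd1N
    obtain ⟨k, hk⟩ := hmemz a
    have hkd1 : γu ^ (k * d1) = 1 := by
      rw [pow_mul, ← hk, hd1_def, pow_orderOf_eq_one]
    have hNdvd : N ∣ k * d1 := by rw [← hordγ]; exact orderOf_dvd_of_pow_eq_one hkd1
    obtain ⟨t, ht⟩ := hNdvd
    have hk' : k = N / d1 * t := by
      have hNd : N = N / d1 * d1 := (Nat.div_mul_cancel hd1N).symm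
      apply Nat.eq_of_mul_eq_mul_right hd1pos
      rw [ht]
      conv_lhs => rw [hNd]
      ring
    have hat : a = a1u ^ t := by rw [hk, hk', pow_mul]
    have hcop : Nat.Coprime d1 t := by
      have h5 : orderOf (a1u ^ t) = d1 := by rw [← hat]
      rw [orderOf_pow, hord1] at h5
      have hgd : Nat.gcd d1 t ∣ d1 := Nat.gcd_dvd_left _ _
      have h6 := Nat.div_mul_cancel hgd
      rw [h5] at h6
      have h7 : d1 * Nat.gcd d1 t = d1 * 1 := by rw [mul_one]; exact h6
      exact Nat.eq_of_mul_eq_mul_left hd1pos h7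
    obtain ⟨s, -, hs⟩ := Nat.exists_mul_mod_eq_one_of_coprime hcop.symm hd12
    have ha1a : a1u = a ^ s := by
      rw [hat, ← pow_mul, ← pow_mod_orderOf, hord1, hs, pow_one]
    have ha1T : a1u ∈ T := ha1a ▸ T.pow_mem haT s
    obtain ⟨b1, hb1⟩ := ha1T
    have ha1K : mk a1u 0 ∈ K := (hstep a1u b1 hb1).2
    have ha1val : (a1u : F) = γ ^ (N / d1) := by
      rw [ha1u_def, Units.val_pow_eq_pow_val, hγuval]
    refine ⟨d1, H1, hdd1, hd1N, ?_, ?_, ?_⟩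
    · intro h hh
      show mk 1 h ∈ K
      exact hK (mk_trans_mem_Sgrp _ _ H hh)
    · refine ⟨pow_ne_zero _ hγ0, fun _ => rfl, ?_⟩
      have hR : Subfield.closure {γ ^ (N / d1)} ≤ R := by
        apply (Subfield.closure_le).2
        rw [Set.singleton_subset_iff, ← ha1val]
        exact (hRdef _).2 (hmulH1 a1u ha1K)
      intro x hx h hh
      exact (hRdef _).1 (hR hx) h hh
    · apply le_antisymm
      · intro x hx
        obtain ⟨u, b, rfl⟩ := eq_mk_of_mem_AGL (hA hx)
        obtain ⟨hbH1, huK⟩ := hstep u b hx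
        have huT : u ∈ T := ⟨b, hx⟩
        obtain ⟨n, hn⟩ := hmemT u huT
        have hdecomp : mk 1 b * mk u 0 = mk u b := by
          rw [mk_mul]; exact mk_congr (one_mul u) (by simp)
        rw [← hdecomp]
        apply mul_mem
        · exact mk_trans_mem_Sgrp _ _ H1 hbH1
        · have hu' : mk u 0 = (mk a1u 0) ^ (t * n) := by
            rw [mk_pow]
            exact mk_congr (by rw [hn, hat, ← pow_mul]) rfl
          rw [hu']
          apply pow_mem
          have h8 := mk_left_mem_Sgrp a1u 0 H1
          rwa [ha1val] at h8
      · apply (Subgroup.closure_le _).2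
        rintro x (hx | ⟨h, hh, hx⟩)
        · have h9 : x = mk a1u 0 := Units.ext (by rw [hx, mk_val, ha1val])
          rw [h9]; exact ha1K
        · have h9 : x = mk 1 h := Units.ext (by rw [hx, mk_val]; simp)
          rw [h9]; exact (hH1mem h).1 hh
  · rintro ⟨d1, H1, hdd1, hd1q, hHH1, hS1, rfl⟩
    have hd1ne0 : d1 ≠ 0 := by
      rintro rfl; have := Nat.eq_zero_of_zero_dvd hd1q; omega
    have hdne0 : d ≠ 0 := by
      rintro rfl
      have := Nat.eq_zero_of_zero_dvd hdd1; omega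
    constructor
    · have hpow : γ ^ ((q - 1) / d) = (γ ^ ((q - 1) / d1)) ^ (d1 / d) := by
        rw [← pow_mul]
        congr 1
        obtain ⟨m, hm⟩ := hd1q
        obtain ⟨e, he⟩ := hdd1
        have h1 : (q - 1) / d1 = m := by
          rw [hm]; exact Nat.mul_div_cancel_left m (Nat.pos_of_ne_zero hd1ne0)
        have h2 : d1 / d = e := by
          rw [he]; exact Nat.mul_div_cancel_left e (Nat.pos_of_ne_zero hdne0)
        have h3 : (q - 1) / d = e * m := by
          rw [hm, he, mul_assoc]
          exact Nat.mul_div_cancel_left _ (Nat.pos_of_ne_zero hdne0)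
        rw [h1, h2, h3, mul_comm]
      rw [hpow]
      exact Sgrp_pow_le (Units.mk0 (γ ^ ((q - 1) / d1)) (pow_ne_zero _ hγ0)) (d1 / d) H H1 hHH1
    · exact Sgrp_le_AGL _ _ _
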